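/- Let w₁,…,w_k ∈ A* with N = max |wⱼ|. Suppose there exist: a word v ∈ A^N; a word u₀ ∈ A* such that v·u₀ ∈ WMIX(w₁,…,w_k); and a nonempty word p and position such that v·u₀ can be written v·u₀ = x·y with suff_N(x) = suff_N(x·p) and the occurrence-count contribution vector of the pumped segment is balanced, i.e., for all j, j', the number of occurrences of w_j ending inside each inserted copy of p equals that of w_{j'}. Then WMIX(w₁,…,w_k) is infinite. More concretely: if there exist words x, p, y with p nonempty, x·y ∈ WMIX(w₁,…,w_k), |x| ≥ N, suff_N(x·p) = suff_N(x), and |x·p·y|_{w_j} − |x·y|_{w_j} is the same for all j, then x·p^n·y ∈ WMIX(w₁,…,w_k) for all n ≥ 0, hence WMIX(w₁,…,w_k) is infinite. -/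
import Mathlib

noncomputable def occ {A : Type*} (w u : List A) : ℕ :=
  Nat.card {p : List A × List A // p.1 ++ u ++ p.2 = w}

def suffN {A : Type*} (N : ℕ) (l : List A) : List A := l.drop (l.length - N)

section helpers
variable {A : Type*}

lemma occ_set_finite (w u : List A) : Finite {p : List A × List A // p.1 ++ u ++ p.2 = w} := by
  apply Finite.of_injective (fun p : {p : List A × List A // p.1 ++ u ++ p.2 = w} =>
    (⟨p.1.1.length, by
      have h := congrArg List.length p.2
      simp [List.length_append] at h
      omega⟩ : Fin (w.length + 1)))
  rintro ⟨⟨a1, a2⟩, ha⟩ ⟨⟨b1, b2⟩, hb⟩ h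
  simp only [Fin.mk.injEq] at h
  have ha' : a1 ++ (u ++ a2) = w := by simpa [List.append_assoc] using ha
  have hb' : b1 ++ (u ++ b2) = w := by simpa [List.append_assoc] using hb
  obtain ⟨h1, h2⟩ := List.append_inj (ha'.trans hb'.symm) h
  have h3 : a2 = b2 := List.append_cancel_left h2
  simp only [Subtype.mk.injEq, Prod.mk.injEq]
  exact ⟨h1, h3⟩

open scoped Classical in
lemma card_prefix (u l : List A) :
    Nat.card {q : List A // u ++ q = l} = if u <+: l then 1 else 0 := by
  split
  case isTrue h =>
    obtain ⟨q, hq⟩ := h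
    rw [Nat.card_eq_one_iff_unique]
    refine ⟨⟨?_⟩, ⟨⟨q, hq⟩⟩⟩
    rintro ⟨q1, h1⟩ ⟨q2, h2⟩
    simp only [Subtype.mk.injEq]
    exact List.append_cancel_left (h1.trans h2.symm)
  case isFalse h =>
    haveI : IsEmpty {q : List A // u ++ q = l} := ⟨fun q => h ⟨q.1, q.2⟩⟩
    exact Nat.card_of_isEmpty

open scoped Classical in
lemma occ_cons (a : A) (w u : List A) :
    occ (a :: w) u = (if u <+: a :: w then 1 else 0) + occ w u := by
  classical
  haveI := occ_set_finite (a :: w) u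
  haveI := occ_set_finite w u
  haveI : Subsingleton {q : List A // u ++ q = a :: w} :=
    ⟨fun q1 q2 => Subtype.ext (List.append_cancel_left (q1.2.trans q2.2.symm))⟩
  let f : {q : List A // u ++ q = a :: w} ⊕ {p : List A × List A // p.1 ++ u ++ p.2 = w} →
      {p : List A × List A // p.1 ++ u ++ p.2 = a :: w} :=
    Sum.elim (fun q => ⟨([], q.1), by simpa using q.2⟩)
             (fun p => ⟨(a :: p.1.1, p.1.2), by rw [List.cons_append, List.cons_append, p.2]⟩)
  have hf : Function.Bijective f := by
    constructor
    · rintro (⟨q1, h1⟩ | ⟨⟨l1, l2⟩, h1⟩) (⟨q2, h2⟩ | ⟨⟨m1, m2⟩, h2⟩) h <;>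
        simp only [f, Sum.elim_inl, Sum.elim_inr, Subtype.mk.injEq, Prod.mk.injEq] at h <;>
        simp_all
    · rintro ⟨⟨l1, l2⟩, h⟩
      rcases l1 with _ | ⟨b, l1⟩
      · exact ⟨Sum.inl ⟨l2, by simpa using h⟩, rfl⟩
      · have hb : b = a ∧ l1 ++ u ++ l2 = w := by
          rw [List.cons_append, List.cons_append] at h
          simpa using h
        exact ⟨Sum.inr ⟨(l1, l2), hb.2⟩, by simp [f, hb.1]⟩
  rw [occ, ← Nat.card_congr (Equiv.ofBijective f hf), Nat.card_sum, card_prefix]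
  rfl

lemma prefix_append_iff_of_le {u v : List A} (t : List A) (h : u.length ≤ v.length) :
    u <+: v ++ t ↔ u <+: v := by
  constructor
  · intro hp
    rw [List.prefix_iff_eq_take] at hp ⊢
    rwa [List.take_append_of_le_length h] at hp
  · exact fun hp => hp.trans (v.prefix_append t)

lemma occ_append_append (u s t : List A) (hu : u.length ≤ s.length) (c : List A) :
    occ (c ++ (s ++ t)) u + occ s u = occ (c ++ s) u + occ (s ++ t) u := by
  induction c with
  | nil => simp [Nat.add_comm]
  | cons a c ih =>
    rw [List.cons_append, List.cons_append, occ_cons, occ_cons]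
    have hiff : (u <+: a :: (c ++ (s ++ t))) ↔ (u <+: a :: (c ++ s)) := by
      have he : a :: (c ++ (s ++ t)) = (a :: (c ++ s)) ++ t := by simp
      rw [he]
      apply prefix_append_iff_of_le
      simp only [List.length_cons, List.length_append]
      omega
    by_cases h : u <+: a :: (c ++ s)
    · rw [if_pos h, if_pos (hiff.mpr h)]; omega
    · rw [if_neg h, if_neg (fun hh => h (hiff.mp hh))]; omega

lemma occ_pump {x p u : List A} {N : ℕ} (hx : N ≤ x.length) (hu : u.length ≤ N)
    (hsuff : suffN N (x ++ p) = suffN N x) (t : List A) :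
    occ (x ++ (p ++ t)) u + occ x u = occ (x ++ p) u + occ (x ++ t) u := by
  set s := x.drop (x.length - N) with hs
  have hslen : s.length = N := by
    simp only [hs, List.length_drop]; omega
  have hxs : x.take (x.length - N) ++ s = x := List.take_append_drop _ _
  have hxps : (x ++ p).take ((x ++ p).length - N) ++ s = x ++ p := by
    have h1 := List.take_append_drop ((x ++ p).length - N) (x ++ p)
    have h2 : (x ++ p).drop ((x ++ p).length - N) = s := hsuff
    rwa [h2] at h1
  have K1 := occ_append_append u s t (hslen ▸ hu) (x.take (x.length - N))
  have K2 := occ_append_append u s t (hslen ▸ hu) ((x ++ p).take ((x ++ p).length - N))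
  rw [← List.append_assoc, hxs] at K1
  rw [← List.append_assoc, hxps] at K2
  simp only [List.append_assoc] at K1 K2 ⊢
  omega

lemma flatten_replicate_length (p : List A) (n : ℕ) :
    (List.replicate n p).flatten.length = n * p.length := by
  induction n with
  | zero => simp
  | succ n ih => simp [List.replicate_succ, ih, Nat.succ_mul]; omega

end helpers

theorem wmix_pumping_sufficient {A : Type*} {k : ℕ} (ws : Fin k → List A) (N : ℕ)
    (hN : N = Finset.univ.sup fun j => (ws j).length)
    (x p y : List A) (hp : p ≠ [])
    (hmem : ∀ j j', occ (x ++ y) (ws j) = occ (x ++ y) (ws j'))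
    (hx : N ≤ x.length)
    (hsuff : suffN N (x ++ p) = suffN N x)
    (d : ℕ) (hd : ∀ j, occ (x ++ p ++ y) (ws j) = occ (x ++ y) (ws j) + d) :
    (∀ n : ℕ, ∀ j j',
        occ (x ++ (List.replicate n p).flatten ++ y) (ws j) =
          occ (x ++ (List.replicate n p).flatten ++ y) (ws j')) ∧
      {w : List A | ∀ j j', occ w (ws j) = occ w (ws j')}.Infinite := by
  have hplen : 0 < p.length := List.length_pos_iff.mpr hp
  have hw : ∀ j, (ws j).length ≤ N := fun j => hN ▸ Finset.le_sup (f := fun j => (ws j).length) (Finset.mem_univ j)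
  have key : ∀ n j, occ (x ++ (List.replicate n p).flatten ++ y) (ws j)
      = occ (x ++ y) (ws j) + n * d := by
    intro n j
    induction n with
    | zero => simp
    | succ n ih =>
      have h1 := occ_pump hx (hw j) hsuff ((List.replicate n p).flatten ++ y)
      have h2 := occ_pump hx (hw j) hsuff y
      have h3 := hd j
      have e1 : x ++ (List.replicate (n + 1) p).flatten ++ y
          = x ++ (p ++ ((List.replicate n p).flatten ++ y)) := by
        simp [List.replicate_succ, List.append_assoc]
      rw [e1, Nat.add_mul, Nat.one_mul]
      simp only [List.append_assoc] at h1 h2 h3 ih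
      set M := n * d with hM
      omega
  have mem : ∀ n, (x ++ (List.replicate n p).flatten ++ y) ∈
      {w : List A | ∀ j j', occ w (ws j) = occ w (ws j')} := by
    intro n j j'
    rw [key n j, key n j', hmem j j']
  refine ⟨fun n => mem n, ?_⟩
  apply Set.infinite_of_injective_forall_mem
    (f := fun n : ℕ => x ++ (List.replicate n p).flatten ++ y) ?_ mem
  intro m n h
  have hl := congrArg List.length h
  simp only [List.length_append, flatten_replicate_length] at hl
  have : m * p.length = n * p.length := by omega
  exact Nat.eq_of_mul_eq_mul_right hplen this
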